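/- The tempered negativity of the two-qutrit state ω₃ := (1/2)(P₃ − Φ₃) equals 2, i.e. N_τ(ω₃) = 2; in particular the tempered logarithmic negativity E_N^τ(ω₃) = log₂ N_τ(ω₃) equals 1. -/

import Mathlib

open Matrix
open scoped ComplexOrder

section Defs

variable {ιA ιB : Type*}

def ptranspose (M : Matrix (ιA × ιB) (ιA × ιB) ℂ) : Matrix (ιA × ιB) (ιA × ιB) ℂ :=
  Matrix.of fun p q => M (p.1, q.2) (q.1, p.2)

def IsPPT [Fintype ιA] [Fintype ιB] (M : Matrix (ιA × ιB) (ιA × ιB) ℂ) : Prop :=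
  M.PosSemidef ∧ (ptranspose M).PosSemidef

def IsState {ι : Type*} [Fintype ι] (ρ : Matrix ι ι ℂ) : Prop :=
  ρ.PosSemidef ∧ ρ.trace = 1

def idTensor (ιR : Type*) (Φ : Matrix ιA ιA ℂ →ₗ[ℂ] Matrix ιB ιB ℂ) :
    Matrix (ιR × ιA) (ιR × ιA) ℂ →ₗ[ℂ] Matrix (ιR × ιB) (ιR × ιB) ℂ where
  toFun M := Matrix.of fun p q => Φ (Matrix.of fun a b => M (p.1, a) (q.1, b)) p.2 q.2
  map_add' M N := by
    funext p q
    show Φ ((Matrix.of fun a b => M (p.1, a) (q.1, b)) + (Matrix.of fun a b => N (p.1, a) (q.1, b))) p.2 q.2 = _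
    rw [map_add]
    rfl
  map_smul' c M := by
    funext p q
    show Φ (c • (Matrix.of fun a b => M (p.1, a) (q.1, b))) p.2 q.2 = _
    rw [_root_.map_smul]
    rfl

noncomputable def opNorm {ι : Type*} [Fintype ι] [DecidableEq ι] (M : Matrix ι ι ℂ) : ℝ :=
  ‖Matrix.toEuclideanCLM (𝕜 := ℂ) (n := ι) M‖

noncomputable def traceNorm {ι : Type*} [Fintype ι] [DecidableEq ι] (M : Matrix ι ι ℂ) : ℝ :=
  (((Matrix.posSemidef_conjTranspose_mul_self M).1.eigenvectorUnitary.1 *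
    diagonal (((↑) : ℝ → ℂ) ∘ Real.sqrt ∘ (Matrix.posSemidef_conjTranspose_mul_self M).1.eigenvalues) *
    (star (Matrix.posSemidef_conjTranspose_mul_self M).1.eigenvectorUnitary : Matrix ι ι ℂ)).trace).re

/-- The tempered negativity `N_τ(ρ|ω)`. -/
noncomputable def temperedNegRel [Fintype ιA] [Fintype ιB] [DecidableEq ιA] [DecidableEq ιB]
    (ρ ω : Matrix (ιA × ιB) (ιA × ιB) ℂ) : ℝ :=
  sSup {t : ℝ | ∃ X : Matrix (ιA × ιB) (ιA × ιB) ℂ, X.IsHermitian ∧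
    opNorm (ptranspose X) ≤ 1 ∧ opNorm X = ((X * ω).trace).re ∧ t = ((X * ρ).trace).re}

noncomputable def temperedNeg [Fintype ιA] [Fintype ιB] [DecidableEq ιA] [DecidableEq ιB]
    (ρ : Matrix (ιA × ιB) (ιA × ιB) ℂ) : ℝ :=
  temperedNegRel ρ ρ

/-- The tempered PPT robustness `R^τ(ρ|ω)`, via `1 + 2 R^τ(ρ|ω) = sup {...}`. -/
noncomputable def temperedRobRel [Fintype ιA] [Fintype ιB] [DecidableEq ιA] [DecidableEq ιB]
    (ρ ω : Matrix (ιA × ιB) (ιA × ιB) ℂ) : ℝ :=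
  (sSup {t : ℝ | ∃ X : Matrix (ιA × ιB) (ιA × ιB) ℂ, X.IsHermitian ∧
    (∀ W : Matrix (ιA × ιB) (ιA × ιB) ℂ, IsPPT W → |((X * W).trace).re| ≤ (W.trace).re) ∧
    opNorm X = ((X * ω).trace).re ∧ t = ((X * ρ).trace).re} - 1) / 2

noncomputable def temperedRob [Fintype ιA] [Fintype ιB] [DecidableEq ιA] [DecidableEq ιB]
    (ρ : Matrix (ιA × ιB) (ιA × ιB) ℂ) : ℝ :=
  temperedRobRel ρ ρ

/-- The channel tempered negativity. -/
noncomputable def chanTemperedNeg [Fintype ιA] [Fintype ιB] [DecidableEq ιA] [DecidableEq ιB]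
    (Λ : Matrix ιA ιA ℂ →ₗ[ℂ] Matrix ιB ιB ℂ) : ℝ :=
  sSup {t : ℝ | ∃ ρ : Matrix (ιA × ιA) (ιA × ιA) ℂ, IsState ρ ∧
    t = temperedNeg ((idTensor ιA Λ) ρ)}

/-- The channel tempered robustness `R^τ(Λ'|Λ)`. -/
noncomputable def chanTemperedRobRel [Fintype ιA] [Fintype ιB] [DecidableEq ιA] [DecidableEq ιB]
    (Λ' Λ : Matrix ιA ιA ℂ →ₗ[ℂ] Matrix ιB ιB ℂ) : ℝ :=
  sSup {t : ℝ | ∃ ρ : Matrix (ιA × ιA) (ιA × ιA) ℂ, IsState ρ ∧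
    t = temperedRobRel ((idTensor ιA Λ') ρ) ((idTensor ιA Λ) ρ)}

/-- The diamond norm. -/
noncomputable def diamondNorm [Fintype ιA] [Fintype ιB] [DecidableEq ιA] [DecidableEq ιB]
    (Φ : Matrix ιA ιA ℂ →ₗ[ℂ] Matrix ιB ιB ℂ) : ℝ :=
  sSup {t : ℝ | ∃ ρ : Matrix (ιA × ιA) (ιA × ιA) ℂ, IsState ρ ∧
    t = traceNorm ((idTensor ιA Φ) ρ)}

/-- The `n`-fold tensor power of a linear map on matrices. -/
noncomputable def tensorPow [Fintype ιA] [DecidableEq ιA] (n : ℕ)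
    (Λ : Matrix ιA ιA ℂ →ₗ[ℂ] Matrix ιB ιB ℂ) :
    Matrix (Fin n → ιA) (Fin n → ιA) ℂ →ₗ[ℂ] Matrix (Fin n → ιB) (Fin n → ιB) ℂ where
  toFun M := Matrix.of fun p q => ∑ a : Fin n → ιA, ∑ b : Fin n → ιA,
      M a b * ∏ i, Λ (Matrix.single (a i) (b i) 1) (p i) (q i)
  map_add' M N := by
    funext p q
    simp [Matrix.add_apply, add_mul, Finset.sum_add_distrib]
  map_smul' c M := by
    funext p q
    simp [Matrix.smul_apply, Finset.mul_sum, mul_assoc]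

/-- The `n`-fold tensor power of a bipartite state, regarded as bipartite across the `Aⁿ:Bⁿ` cut. -/
noncomputable def statePow (n : ℕ) (ρ : Matrix (ιA × ιB) (ιA × ιB) ℂ) :
    Matrix ((Fin n → ιA) × (Fin n → ιB)) ((Fin n → ιA) × (Fin n → ιB)) ℂ :=
  Matrix.of fun p q => ∏ i, ρ (p.1 i, p.2 i) (q.1 i, q.2 i)

/-- The Choi matrix `J_Φ = (1/d_A) ∑_{ij} |i⟩⟨j| ⊗ Φ(|i⟩⟨j|)`. -/
noncomputable def choi [Fintype ιA] [DecidableEq ιA]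
    (Φ : Matrix ιA ιA ℂ →ₗ[ℂ] Matrix ιB ιB ℂ) : Matrix (ιA × ιB) (ιA × ιB) ℂ :=
  Matrix.of fun p q => (Fintype.card ιA : ℂ)⁻¹ * Φ (Matrix.single p.1 q.1 1) p.2 q.2


/-- Complete positivity. -/
def IsCP [Fintype ιA] [Fintype ιB] (Φ : Matrix ιA ιA ℂ →ₗ[ℂ] Matrix ιB ιB ℂ) : Prop :=
  ∀ (k : ℕ) (X : Matrix (Fin k × ιA) (Fin k × ιA) ℂ), X.PosSemidef →
    ((idTensor (Fin k) Φ) X).PosSemidef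

/-- Trace preservation. -/
def IsTP [Fintype ιA] [Fintype ιB] (Φ : Matrix ιA ιA ℂ →ₗ[ℂ] Matrix ιB ιB ℂ) : Prop :=
  ∀ X : Matrix ιA ιA ℂ, (Φ X).trace = X.trace

/-- A quantum channel: completely positive and trace preserving. -/
def IsChannel [Fintype ιA] [Fintype ιB] (Φ : Matrix ιA ιA ℂ →ₗ[ℂ] Matrix ιB ιB ℂ) : Prop :=
  IsCP Φ ∧ IsTP Φ

/-- A map is PPT-binding if `id_k ⊗ Φ` sends positive semidefinite matrices to PPT matrices. -/
def PPTBinding [Fintype ιA] [Fintype ιB] (Φ : Matrix ιA ιA ℂ →ₗ[ℂ] Matrix ιB ιB ℂ) : Prop :=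
  ∀ (k : ℕ) (X : Matrix (Fin k × ιA) (Fin k × ιA) ℂ), X.PosSemidef →
    IsPPT ((idTensor (Fin k) Φ) X)

/-- A PPT-binding channel. -/
def PPTBindingChannel [Fintype ιA] [Fintype ιB] (Φ : Matrix ιA ιA ℂ →ₗ[ℂ] Matrix ιB ιB ℂ) : Prop :=
  IsChannel Φ ∧ PPTBinding Φ

/-- The channel robustness with respect to PPT-binding channels. -/
noncomputable def RKE [Fintype ιA] [Fintype ιB] (Λ : Matrix ιA ιA ℂ →ₗ[ℂ] Matrix ιB ιB ℂ) : ℝ :=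
  sInf {l : ℝ | 0 ≤ l ∧ ∃ Γ Θ : Matrix ιA ιA ℂ →ₗ[ℂ] Matrix ιB ιB ℂ,
    PPTBindingChannel Γ ∧ PPTBindingChannel Θ ∧ Λ + (l : ℂ) • Γ = ((1 + l : ℝ) : ℂ) • Θ}

/-- The PPT robustness of a state. -/
noncomputable def RPPT [Fintype ιA] [Fintype ιB] (ρ : Matrix (ιA × ιB) (ιA × ιB) ℂ) : ℝ :=
  sInf {t : ℝ | ∃ δ : Matrix (ιA × ιB) (ιA × ιB) ℂ, IsPPT δ ∧ IsPPT (ρ + δ) ∧ (δ.trace).re = t}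


end Defs

/-- The projector `P₃ = ∑ᵢ |ii⟩⟨ii|` onto the maximally correlated subspace of `ℂ³ ⊗ ℂ³`. -/
noncomputable def P3 : Matrix (Fin 3 × Fin 3) (Fin 3 × Fin 3) ℂ :=
  Matrix.of fun p q => if p.1 = p.2 ∧ q.1 = q.2 ∧ p.1 = q.1 then 1 else 0

/-- The maximally entangled two-qutrit state `Φ₃ = |Φ₃⟩⟨Φ₃|`, `|Φ₃⟩ = (1/√3) ∑ᵢ |ii⟩`. -/
noncomputable def Phi3 : Matrix (Fin 3 × Fin 3) (Fin 3 × Fin 3) ℂ :=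
  Matrix.of fun p q => if p.1 = p.2 ∧ q.1 = q.2 then 1 / 3 else 0

/-- The two-qutrit state `ω₃ = (1/2)(P₃ − Φ₃)`. -/
noncomputable def omega3 : Matrix (Fin 3 × Fin 3) (Fin 3 × Fin 3) ℂ :=
  (1 / 2 : ℂ) • (P3 - Phi3)


section Aux
set_option linter.unusedSectionVars false

open scoped BigOperators

variable {ι ιA ιB : Type*} [Fintype ι] [DecidableEq ι] [Fintype ιA] [Fintype ιB]

/-- The outer product `|v⟩⟨v|`. -/
noncomputable def outerV (v : ι → ℂ) : Matrix ι ι ℂ :=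
  Matrix.of fun p q => v p * (starRingEnd ℂ) (v q)

lemma toEuclideanCLM_piLp_equiv_symm' (M : Matrix ι ι ℂ) (x : ι → ℂ) :
    Matrix.toEuclideanCLM (𝕜 := ℂ) M ((WithLp.equiv 2 (ι → ℂ)).symm x) =
      (WithLp.equiv 2 (ι → ℂ)).symm (Matrix.toLin' M x) := rfl

lemma trace_mul_outerV (M : Matrix ι ι ℂ) (v : ι → ℂ) :
    (M * outerV v).trace = ∑ p, (starRingEnd ℂ) (v p) * (M.mulVec v p) := by
  simp only [Matrix.trace, Matrix.diag, Matrix.mul_apply, outerV, Matrix.mulVec,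
    Matrix.of_apply, dotProduct, Finset.mul_sum]
  congr 1; funext p; congr 1; funext q; ring

lemma abs_trace_mul_outerV_le (M : Matrix ι ι ℂ) (v : ι → ℂ) :
    |((M * outerV v).trace).re| ≤ opNorm M * ∑ p, ‖v p‖ ^ 2 := by
  set w : EuclideanSpace ℂ ι := (WithLp.equiv 2 (ι → ℂ)).symm v with hw
  have h1 : (M * outerV v).trace = inner ℂ w ((Matrix.toEuclideanCLM (𝕜 := ℂ) M) w) := by
    rw [trace_mul_outerV, toEuclideanCLM_piLp_equiv_symm']
    simp [PiLp.inner_apply, RCLike.inner_apply, w]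
    exact Finset.sum_congr rfl fun _ _ => mul_comm _ _
  have h2 : ‖(M * outerV v).trace‖ ≤ ‖w‖ * (opNorm M * ‖w‖) := by
    rw [h1]
    calc ‖(inner ℂ w ((Matrix.toEuclideanCLM (𝕜 := ℂ) M) w) : ℂ)‖
        ≤ ‖w‖ * ‖(Matrix.toEuclideanCLM (𝕜 := ℂ) M) w‖ := norm_inner_le_norm _ _
      _ ≤ ‖w‖ * (opNorm M * ‖w‖) := by
          gcongr
          exact ContinuousLinearMap.le_opNorm _ _
  have h3 : ‖w‖ * ‖w‖ = ∑ p, ‖v p‖ ^ 2 := by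
    rw [EuclideanSpace.norm_eq, Real.mul_self_sqrt (by positivity)]
    rfl
  calc |((M * outerV v).trace).re| ≤ ‖(M * outerV v).trace‖ := Complex.abs_re_le_norm _
    _ ≤ ‖w‖ * (opNorm M * ‖w‖) := h2
    _ = opNorm M * (‖w‖ * ‖w‖) := by ring
    _ = opNorm M * ∑ p, ‖v p‖ ^ 2 := by rw [h3]

lemma trace_ptranspose_mul (X ρ : Matrix (ιA × ιB) (ιA × ιB) ℂ) :
    ((ptranspose X) * (ptranspose ρ)).trace = (X * ρ).trace := by
  simp only [Matrix.trace, Matrix.diag, Matrix.mul_apply, ptranspose, Matrix.of_apply]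
  rw [← Fintype.sum_prod_type', ← Fintype.sum_prod_type']
  exact Fintype.sum_equiv ⟨fun x => ((x.1.1, x.2.2), (x.2.1, x.1.2)),
    fun x => ((x.1.1, x.2.2), (x.2.1, x.1.2)), fun x => rfl, fun x => rfl⟩ _ _ (fun x => rfl)

lemma opNorm_le_of_mulVec {c : ℝ} (hc : 0 ≤ c) (M : Matrix ι ι ℂ)
    (h : ∀ v : ι → ℂ, (∑ p, ‖M.mulVec v p‖ ^ 2) ≤ c ^ 2 * ∑ p, ‖v p‖ ^ 2) :
    opNorm M ≤ c := by
  apply ContinuousLinearMap.opNorm_le_bound _ hc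
  intro w
  have hrw : w = (WithLp.equiv 2 (ι → ℂ)).symm (WithLp.equiv 2 (ι → ℂ) w) := rfl
  rw [hrw, toEuclideanCLM_piLp_equiv_symm']
  set v := WithLp.equiv 2 (ι → ℂ) w
  show ‖(WithLp.equiv 2 (ι → ℂ)).symm (M.mulVec v)‖ ≤ c * ‖(WithLp.equiv 2 (ι → ℂ)).symm v‖
  rw [EuclideanSpace.norm_eq, EuclideanSpace.norm_eq]
  calc √(∑ p, ‖M.mulVec v p‖ ^ 2) ≤ √(c ^ 2 * ∑ p, ‖v p‖ ^ 2) := Real.sqrt_le_sqrt (h v)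
    _ = c * √(∑ p, ‖v p‖ ^ 2) := by
        rw [Real.sqrt_mul (by positivity), Real.sqrt_sq hc]

lemma opNorm_ge_of_vec (M : Matrix ι ι ℂ) {c : ℝ} (v : ι → ℂ)
    (hv : v ≠ 0) (h : (∑ p, ‖M.mulVec v p‖ ^ 2) = c ^ 2 * ∑ p, ‖v p‖ ^ 2) (hc : 0 ≤ c) :
    c ≤ opNorm M := by
  set w : EuclideanSpace ℂ ι := (WithLp.equiv 2 (ι → ℂ)).symm v with hw
  have hwne : w ≠ 0 := by simpa [hw] using hv
  have hle := ContinuousLinearMap.le_opNorm (Matrix.toEuclideanCLM (𝕜 := ℂ) M) w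
  rw [toEuclideanCLM_piLp_equiv_symm'] at hle
  simp only [Matrix.toLin'_apply] at hle
  have hnv : ‖(WithLp.equiv 2 (ι → ℂ)).symm (M.mulVec v)‖ = c * ‖w‖ := by
    rw [EuclideanSpace.norm_eq, hw, EuclideanSpace.norm_eq]
    show √(∑ p, ‖M.mulVec v p‖ ^ 2) = c * √(∑ p, ‖v p‖ ^ 2)
    rw [h, Real.sqrt_mul (by positivity), Real.sqrt_sq hc]
  rw [hnv] at hle
  have hpos : 0 < ‖w‖ := norm_pos_iff.2 hwne
  exact le_of_mul_le_mul_right hle hpos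

end Aux

section Omega3

/-- the witness `X = 2 P₃ - 3 Φ₃`. -/
noncomputable def X3 : Matrix (Fin 3 × Fin 3) (Fin 3 × Fin 3) ℂ :=
  (2 : ℂ) • P3 - (3 : ℂ) • Phi3

def eV (i : Fin 3) : Fin 3 × Fin 3 → ℂ := fun p => if p = (i, i) then 1 else 0
def aV (i j : Fin 3) : Fin 3 × Fin 3 → ℂ :=
  fun p => if p = (i, j) then 1 else if p = (j, i) then -1 else 0
def sV (i j : Fin 3) : Fin 3 × Fin 3 → ℂ :=
  fun p => if p = (i, j) then 1 else if p = (j, i) then 1 else 0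

set_option maxHeartbeats 1000000 in
lemma omega3_pt_decomp :
    ptranspose omega3 =
      (1/3 : ℂ) • (outerV (eV 0) + outerV (eV 1) + outerV (eV 2)) +
      (1/12 : ℂ) • (outerV (aV 0 1) + outerV (aV 0 2) + outerV (aV 1 2)) -
      (1/12 : ℂ) • (outerV (sV 0 1) + outerV (sV 0 2) + outerV (sV 1 2)) := by
  funext p q
  obtain ⟨i, j⟩ := p
  obtain ⟨k, l⟩ := q
  simp only [ptranspose, omega3, P3, Phi3, outerV, eV, aV, sV, Matrix.smul_apply,
    Matrix.sub_apply, Matrix.add_apply, Matrix.of_apply, Prod.mk.injEq]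
  fin_cases i <;> fin_cases j <;> fin_cases k <;> fin_cases l <;> norm_num [Fin.ext_iff]

lemma sum_eV_sq (i : Fin 3) : ∑ p, ‖eV i p‖ ^ 2 = 1 := by
  fin_cases i <;>
    simp [eV, Fintype.sum_prod_type, Fin.sum_univ_three, Prod.ext_iff] <;> norm_num

lemma sum_aV_sq (i j : Fin 3) (h : i ≠ j) : ∑ p, ‖aV i j p‖ ^ 2 = 2 := by
  fin_cases i <;> fin_cases j <;>
    simp_all [aV, Fintype.sum_prod_type, Fin.sum_univ_three, Prod.ext_iff] <;> norm_num

lemma sum_sV_sq (i j : Fin 3) (h : i ≠ j) : ∑ p, ‖sV i j p‖ ^ 2 = 2 := by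
  fin_cases i <;> fin_cases j <;>
    simp_all [sV, Fintype.sum_prod_type, Fin.sum_univ_three, Prod.ext_iff] <;> norm_num

set_option maxHeartbeats 1000000 in
lemma X3_hermitian : X3.IsHermitian := by
  show X3.conjTranspose = X3
  funext p q
  obtain ⟨i, j⟩ := p
  obtain ⟨k, l⟩ := q
  simp only [X3, P3, Phi3, Matrix.conjTranspose_apply, Matrix.sub_apply, Matrix.smul_apply,
    Matrix.of_apply]
  fin_cases i <;> fin_cases j <;> fin_cases k <;> fin_cases l <;> norm_num [Fin.ext_iff]

set_option maxHeartbeats 1000000 in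
lemma trace_X3_omega3 : (X3 * omega3).trace = 2 := by
  simp only [X3, P3, Phi3, omega3, Matrix.trace, Matrix.diag, Matrix.mul_apply,
    Matrix.sub_apply, Matrix.smul_apply, Matrix.of_apply, Fintype.sum_prod_type,
    Fin.sum_univ_three]
  norm_num [Fin.ext_iff]

set_option maxHeartbeats 1000000 in
lemma ptX3_mulVec (v : Fin 3 × Fin 3 → ℂ) (p : Fin 3 × Fin 3) :
    (ptranspose X3).mulVec v p = (if p.1 = p.2 then 1 else -1) * v (p.2, p.1) := by
  obtain ⟨i, j⟩ := p
  simp only [Matrix.mulVec, dotProduct, ptranspose, X3, P3, Phi3, Matrix.sub_apply,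
    Matrix.smul_apply, Matrix.of_apply, Fintype.sum_prod_type, Fin.sum_univ_three]
  fin_cases i <;> fin_cases j <;> norm_num [Fin.ext_iff] <;> first | rfl | ring

lemma opNorm_ptX3_le : opNorm (ptranspose X3) ≤ 1 := by
  apply opNorm_le_of_mulVec zero_le_one
  intro v
  calc ∑ p, ‖(ptranspose X3).mulVec v p‖ ^ 2
      = ∑ p : Fin 3 × Fin 3, ‖v (p.2, p.1)‖ ^ 2 := by
        apply Finset.sum_congr rfl
        intro p _
        rw [ptX3_mulVec]
        split_ifs <;> simp
    _ = ∑ p, ‖v p‖ ^ 2 :=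
        Fintype.sum_equiv (Equiv.prodComm (Fin 3) (Fin 3)) _ _ (fun p => rfl)
    _ ≤ 1 ^ 2 * ∑ p, ‖v p‖ ^ 2 := by
        rw [one_pow, one_mul]

set_option maxHeartbeats 1000000 in
lemma X3_mulVec (v : Fin 3 × Fin 3 → ℂ) (i j : Fin 3) :
    X3.mulVec v (i, j) =
      if i = j then 2 * v (i, i) - (v (0, 0) + v (1, 1) + v (2, 2)) else 0 := by
  simp only [Matrix.mulVec, dotProduct, X3, P3, Phi3, Matrix.sub_apply,
    Matrix.smul_apply, Matrix.of_apply, Fintype.sum_prod_type, Fin.sum_univ_three]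
  fin_cases i <;> fin_cases j <;> norm_num [Fin.ext_iff] <;> try (first | rfl | ring)
  show -v (0, 0) - v (1, 1) + v (2, 2) = -v (0, 0) - v (1, 1) - v (2, 2) + v (2, 2) * 2
  ring

lemma norm_sq_complex (z : ℂ) : ‖z‖ ^ 2 = z.re ^ 2 + z.im ^ 2 := by
  rw [Complex.sq_norm, Complex.normSq_apply]; ring

lemma three_term_identity (a b c : ℂ) :
    ‖2 * a - (a + b + c)‖ ^ 2 + ‖2 * b - (a + b + c)‖ ^ 2 + ‖2 * c - (a + b + c)‖ ^ 2
      + ‖a + b + c‖ ^ 2 = 4 * (‖a‖ ^ 2 + ‖b‖ ^ 2 + ‖c‖ ^ 2) := by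
  simp only [norm_sq_complex, Complex.sub_re, Complex.sub_im, Complex.add_re, Complex.add_im,
    Complex.mul_re, Complex.mul_im, Complex.re_ofNat, Complex.im_ofNat]
  ring

lemma opNorm_X3_le : opNorm X3 ≤ 2 := by
  apply opNorm_le_of_mulVec (by norm_num)
  intro v
  have hsum : ∑ p, ‖X3.mulVec v p‖ ^ 2 =
      ‖2 * v (0,0) - (v (0,0) + v (1,1) + v (2,2))‖ ^ 2 +
      ‖2 * v (1,1) - (v (0,0) + v (1,1) + v (2,2))‖ ^ 2 +
      ‖2 * v (2,2) - (v (0,0) + v (1,1) + v (2,2))‖ ^ 2 := by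
    rw [Fintype.sum_prod_type]
    simp only [Fin.sum_univ_three, X3_mulVec]
    norm_num [Fin.ext_iff]
  rw [hsum]
  have hid := three_term_identity (v (0,0)) (v (1,1)) (v (2,2))
  have hnn : (0:ℝ) ≤ ‖v (0,0) + v (1,1) + v (2,2)‖ ^ 2 := by positivity
  have hrest : ‖v (0,0)‖ ^ 2 + ‖v (1,1)‖ ^ 2 + ‖v (2,2)‖ ^ 2 ≤ ∑ p, ‖v p‖ ^ 2 := by
    rw [Fintype.sum_prod_type]
    simp only [Fin.sum_univ_three]
    have : ∀ p : Fin 3 × Fin 3, (0:ℝ) ≤ ‖v p‖ ^ 2 := fun p => by positivity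
    linarith [this (0,1), this (0,2), this (1,0), this (1,2), this (2,0), this (2,1)]
  nlinarith

lemma opNorm_X3_ge : (2 : ℝ) ≤ opNorm X3 := by
  set v : Fin 3 × Fin 3 → ℂ :=
    fun p => if p = ((0 : Fin 3), (0 : Fin 3)) then 1
      else if p = ((1 : Fin 3), (1 : Fin 3)) then -1 else 0 with hv
  apply opNorm_ge_of_vec X3 v
  · intro h
    have := congrFun h ((0 : Fin 3), (0 : Fin 3))
    simp [hv] at this
  · have h1 : ∑ p, ‖X3.mulVec v p‖ ^ 2 = 8 := by
      rw [Fintype.sum_prod_type]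
      simp only [Fin.sum_univ_three, X3_mulVec]
      simp only [hv]; norm_num [Prod.ext_iff, Fin.ext_iff]
    have h2 : ∑ p, ‖v p‖ ^ 2 = 2 := by
      rw [Fintype.sum_prod_type]
      simp only [Fin.sum_univ_three, hv]
      norm_num [Prod.ext_iff, Fin.ext_iff]
    rw [h1, h2]; norm_num
  · norm_num

lemma opNorm_X3 : opNorm X3 = 2 := le_antisymm opNorm_X3_le opNorm_X3_ge

/-- The Hölder-type upper bound: any feasible `X` gives value at most `2`. -/
lemma omega3_upper_bound (X : Matrix (Fin 3 × Fin 3) (Fin 3 × Fin 3) ℂ)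
    (h1 : opNorm (ptranspose X) ≤ 1) : ((X * omega3).trace).re ≤ 2 := by
  have hnn : (0:ℝ) ≤ opNorm (ptranspose X) := norm_nonneg _
  have e1 : (X * omega3).trace = ((ptranspose X) * (ptranspose omega3)).trace :=
    (trace_ptranspose_mul X omega3).symm
  rw [e1, omega3_pt_decomp]
  set Y := ptranspose X with hY
  have key : ∀ v : Fin 3 × Fin 3 → ℂ, ∀ s : ℝ, (∑ p, ‖v p‖ ^ 2 = s) →
      |((Y * outerV v).trace).re| ≤ s := by
    intro v s hs
    calc |((Y * outerV v).trace).re| ≤ opNorm Y * ∑ p, ‖v p‖ ^ 2 :=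
          abs_trace_mul_outerV_le Y v
      _ ≤ 1 * s := by rw [hs]; apply mul_le_mul_of_nonneg_right h1; rw [← hs]; positivity
      _ = s := one_mul s
  have he0 := key (eV 0) 1 (sum_eV_sq 0)
  have he1 := key (eV 1) 1 (sum_eV_sq 1)
  have he2 := key (eV 2) 1 (sum_eV_sq 2)
  have ha01 := key (aV 0 1) 2 (sum_aV_sq 0 1 (by decide))
  have ha02 := key (aV 0 2) 2 (sum_aV_sq 0 2 (by decide))
  have ha12 := key (aV 1 2) 2 (sum_aV_sq 1 2 (by decide))
  have hs01 := key (sV 0 1) 2 (sum_sV_sq 0 1 (by decide))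
  have hs02 := key (sV 0 2) 2 (sum_sV_sq 0 2 (by decide))
  have hs12 := key (sV 1 2) 2 (sum_sV_sq 1 2 (by decide))
  simp only [Matrix.mul_add, Matrix.mul_sub, Matrix.mul_smul, Matrix.trace_add,
    Matrix.trace_sub, Matrix.trace_smul, smul_eq_mul, Complex.add_re, Complex.sub_re,
    Complex.mul_re] at *
  set t1 := ((Y * outerV (eV 0)).trace).re
  set t2 := ((Y * outerV (eV 1)).trace).re
  set t3 := ((Y * outerV (eV 2)).trace).re
  set u1 := ((Y * outerV (aV 0 1)).trace).re
  set u2 := ((Y * outerV (aV 0 2)).trace).re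
  set u3 := ((Y * outerV (aV 1 2)).trace).re
  set w1 := ((Y * outerV (sV 0 1)).trace).re
  set w2 := ((Y * outerV (sV 0 2)).trace).re
  set w3 := ((Y * outerV (sV 1 2)).trace).re
  rw [abs_le] at he0 he1 he2 ha01 ha02 ha12 hs01 hs02 hs12
  norm_num
  nlinarith [he0.1, he0.2, he1.1, he1.2, he2.1, he2.2, ha01.1, ha01.2, ha02.1, ha02.2,
    ha12.1, ha12.2, hs01.1, hs01.2, hs02.1, hs02.2, hs12.1, hs12.2]

end Omega3

/-- **The tempered negativity of `ω₃` equals 2**, hence its tempered logarithmic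
negativity equals 1. -/
theorem temperedNeg_omega3 :
    temperedNeg omega3 = 2 ∧ Real.logb 2 (temperedNeg omega3) = 1 := by
  have htr : ((X3 * omega3).trace).re = 2 := by rw [trace_X3_omega3]; norm_num
  have hwitness : (2 : ℝ) ∈ {t : ℝ | ∃ X : Matrix (Fin 3 × Fin 3) (Fin 3 × Fin 3) ℂ,
      X.IsHermitian ∧ opNorm (ptranspose X) ≤ 1 ∧ opNorm X = ((X * omega3).trace).re ∧
      t = ((X * omega3).trace).re} := by
    exact ⟨X3, X3_hermitian, opNorm_ptX3_le, by rw [htr, opNorm_X3], htr.symm⟩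
  have hub : ∀ t ∈ {t : ℝ | ∃ X : Matrix (Fin 3 × Fin 3) (Fin 3 × Fin 3) ℂ,
      X.IsHermitian ∧ opNorm (ptranspose X) ≤ 1 ∧ opNorm X = ((X * omega3).trace).re ∧
      t = ((X * omega3).trace).re}, t ≤ 2 := by
    rintro t ⟨X, hX, h1, h2, ht⟩
    rw [ht]
    exact omega3_upper_bound X h1
  have hN : temperedNeg omega3 = 2 := by
    unfold temperedNeg temperedNegRel
    apply le_antisymm
    · exact csSup_le ⟨2, hwitness⟩ hub
    · exact le_csSup ⟨2, hub⟩ hwitness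
  refine ⟨hN, ?_⟩
  rw [hN]
  exact Real.logb_self_eq_one (by norm_num)
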